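/- Let $\kappa, \sigma, T > 0$ and let $\phi \in \mathbb{C}$ with $0 < \Re(\phi) < \frac{2\kappa}{\sigma^2(2e^{\kappa T} - 1)}$. Define $G(t;\phi) = \frac{2\kappa}{\sigma^2 + e^{\kappa(T-t)}\left(\frac{2\kappa}{\phi} - \sigma^2\right)}$ for $t \in [0,T]$. Then $\sup_{t \in [0,T]} \Re(G(t;\phi)) = \Re(\phi)$, i.e., $\Re(G(t;\phi)) \le \Re(\phi)$ for all $t \in [0,T]$ with equality at $t = T$. -/

import Mathlib

noncomputable def GfunC (κ σ T : ℝ) (φ : ℂ) (t : ℝ) : ℂ :=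
  (2 * κ : ℂ) / ((σ ^ 2 : ℝ) + (Real.exp (κ * (T - t)) : ℝ) * ((2 * κ : ℂ) / φ - (σ ^ 2 : ℝ)))

lemma Fnn (σ a A v m : ℝ) (hσ : 0 < σ) (ha1 : 1 ≤ a) (hA : 1 < A)
    (hv : 0 < v) (hm : 0 ≤ m) (hc : v * (σ^2*(2*A-1)) ≤ v^2 + m) :
    0 ≤ a*v*(v-σ^2)^2 + σ^2*v*(v-σ^2) + m*(a*v+σ^2) := by
  rcases le_or_gt v (σ^2*(2*A-1)) with h | h
  · nlinarith [mul_nonneg (mul_nonneg hv.le (sub_nonneg.2 h)) (show (0:ℝ) ≤ (a+2*A-2)*σ^2 by nlinarith),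
      mul_nonneg (mul_nonneg hv.le hv.le) (show (0:ℝ) ≤ (4*a*(A-1)^2+2*(A-1))*σ^2 by
        have h2 : (0:ℝ) < σ^2 := by positivity
        nlinarith [mul_nonneg (mul_nonneg (by linarith : (0:ℝ) ≤ 4*a) (sq_nonneg (A-1))) h2.le,
          mul_pos (by linarith : (0:ℝ) < 2*(A-1)) h2]),
      mul_nonneg (sub_nonneg.2 hc) (show (0:ℝ) ≤ a*v+σ^2 by nlinarith)]
  · have hq : 0 < v - σ^2 := by nlinarith
    nlinarith [mul_nonneg hm (show (0:ℝ) ≤ a*v+σ^2 by nlinarith),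
      mul_nonneg (mul_nonneg (mul_nonneg (by linarith : (0:ℝ) ≤ a) hv.le) hq.le) hq.le,
      mul_nonneg (mul_nonneg (sq_nonneg σ) hv.le) hq.le]

lemma core (σ a A v m : ℝ) (hσ : 0 < σ) (ha1 : 1 ≤ a) (hA : 1 < A)
    (hv : 0 < v) (hm : 0 ≤ m) (hc : v * (σ^2*(2*A-1)) ≤ v^2 + m) :
    (σ^2*(1-a) + a*v) * (v^2+m) ≤ v * ((σ^2*(1-a)+a*v)^2 + a^2*m) := by
  nlinarith [mul_nonneg (sub_nonneg.2 ha1) (Fnn σ a A v m hσ ha1 hA hv hm hc)]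

theorem stmt6 (κ σ T : ℝ) (φ : ℂ) (hκ : 0 < κ) (hσ : 0 < σ) (hT : 0 < T)
    (hφ : 0 < φ.re) (hφ2 : φ.re < 2 * κ / (σ ^ 2 * (2 * Real.exp (κ * T) - 1))) :
    (∀ t ∈ Set.Icc (0:ℝ) T, (GfunC κ σ T φ t).re ≤ φ.re) ∧
    (GfunC κ σ T φ T).re = φ.re := by
  have hφ0 : φ ≠ 0 := fun h => by simp [h] at hφ
  have hs : 0 < Complex.normSq φ := Complex.normSq_pos.2 hφ0
  have hA : 1 < Real.exp (κ * T) := by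
    rw [show (1:ℝ) = Real.exp 0 by simp]
    exact Real.exp_lt_exp.2 (by positivity)
  constructor
  · intro t ht
    set A := Real.exp (κ * T) with hAdef
    set a := Real.exp (κ * (T - t)) with hadef
    have ha1 : 1 ≤ a := Real.one_le_exp (by nlinarith [ht.2])
    set s := Complex.normSq φ with hsdef
    set v := 2*κ*φ.re/s with hvdef
    set m := (2*κ*φ.im/s)^2 with hmdef
    have hv : 0 < v := by positivity
    have hm : 0 ≤ m := sq_nonneg _
    have hsv : s * v = 2*κ*φ.re := by rw [hvdef]; field_simp
    have hsm : s * (v^2 + m) = 4*κ^2 := by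
      rw [hvdef, hmdef]
      field_simp
      rw [hsdef, Complex.normSq_apply]; ring
    have hden : 0 < σ^2 * (2*A - 1) := by nlinarith
    have hφ2' : φ.re * (σ^2*(2*A-1)) < 2*κ := by
      rw [lt_div_iff₀ hden] at hφ2; linarith
    have hc : v * (σ^2*(2*A-1)) ≤ v^2 + m := by
      have h1 : s * (v * (σ^2*(2*A-1))) ≤ s * (v^2+m) := by
        rw [hsm, show s * (v * (σ^2*(2*A-1))) = (s*v) * (σ^2*(2*A-1)) by ring, hsv]
        nlinarith
      exact le_of_mul_le_mul_left h1 hs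
    have hkey := core σ a A v m hσ ha1 hA hv hm hc
    -- compute real and imaginary parts of the denominator
    set D : ℂ := (σ ^ 2 : ℝ) + (a : ℝ) * ((2 * κ : ℂ) / φ - (σ ^ 2 : ℝ)) with hDdef
    have hDre : D.re = σ^2*(1-a) + a*v := by
      simp only [hDdef, Complex.add_re, Complex.mul_re, Complex.sub_re, Complex.sub_im,
        Complex.div_re, Complex.div_im, Complex.ofReal_re, Complex.ofReal_im,
        Complex.mul_im, Complex.ofReal_mul, Complex.re_ofNat, Complex.im_ofNat]
      rw [← hsdef, hvdef]
      field_simp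
      ring
    have hDim : D.im = -(a * (2*κ*φ.im/s)) := by
      simp only [hDdef, Complex.add_im, Complex.mul_im, Complex.sub_re, Complex.sub_im,
        Complex.div_re, Complex.div_im, Complex.ofReal_re, Complex.ofReal_im,
        Complex.mul_re, Complex.re_ofNat, Complex.im_ofNat]
      rw [← hsdef]
      field_simp
      ring
    have hG : (GfunC κ σ T φ t).re = 2*κ*D.re / Complex.normSq D := by
      unfold GfunC
      rw [← hadef, ← hDdef, Complex.div_re]
      simp
    have hns : Complex.normSq D = (σ^2*(1-a)+a*v)^2 + a^2*m := by
      rw [Complex.normSq_apply, hDre, hDim, hmdef]; ring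
    rw [hG]
    rcases eq_or_lt_of_le (Complex.normSq_nonneg D) with h0 | h0
    · rw [← h0, div_zero]; exact hφ.le
    · rw [div_le_iff₀ h0]
      -- from hkey: D.re * (v^2+m) ≤ v * normSq D; multiply by s
      have h5 : D.re * (4*κ^2) ≤ (2*κ*φ.re) * Complex.normSq D := by
        calc D.re * (4*κ^2) = s * ((σ^2*(1-a)+a*v) * (v^2+m)) := by
              rw [hDre, ← hsm]; ring
          _ ≤ s * (v * ((σ^2*(1-a)+a*v)^2 + a^2*m)) :=
              mul_le_mul_of_nonneg_left hkey hs.le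
          _ = (s*v) * Complex.normSq D := by rw [hns]; ring
          _ = (2*κ*φ.re) * Complex.normSq D := by rw [hsv]
      nlinarith
  · have : GfunC κ σ T φ T = φ := by
      unfold GfunC
      rw [sub_self, mul_zero, Real.exp_zero]
      push_cast
      have hκ0 : (2*(κ:ℂ)) ≠ 0 := by
        simp [Complex.ofReal_ne_zero.2 hκ.ne']
      rw [show ((σ:ℂ)^2 + 1*(2*↑κ/φ - ↑σ^2)) = 2*↑κ/φ by ring, div_div_eq_mul_div,
        mul_comm, mul_div_assoc, div_self hκ0, mul_one]
    rw [this]
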